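/- Let 𝔡 be a derivation of a finitely generated k-algebra R and k ≥ 0 an integer. Then there is a unique derivation 𝔡^{(k)} of the arc ring J^∞(R) satisfying 𝔡^{(k)}(r^{(j)}) = (𝔡 r)^{(j−k)} for all r ∈ R and j ≥ 0 (with negative-index coefficients zero). Moreover, for derivations 𝔡₁, 𝔡₂ and integers k₁, k₂ ≥ 0 one has [𝔡₁^{(k₁)}, 𝔡₂^{(k₂)}] = [𝔡₁, 𝔡₂]^{(k₁+k₂)}, so the current Lie algebra Der(R)[s] acts on J^∞(R) by derivations. -/

import Mathlib

set_option synthInstance.maxHeartbeats 1000000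
set_option maxHeartbeats 1000000

open MvPolynomial

/-- The universal arc series `f(X₁(s),…)` of a polynomial `f`. -/
noncomputable def arcSeries {𝕜 : Type*} [CommRing 𝕜] {σ : Type*}
    (f : MvPolynomial σ 𝕜) : PowerSeries (MvPolynomial (σ × ℕ) 𝕜) :=
  MvPolynomial.aeval (fun i : σ => PowerSeries.mk fun j : ℕ => MvPolynomial.X (i, j)) f

/-- The `n`-th `s`-coefficient of the arc series of `f`. -/
noncomputable def arcCoeff {𝕜 : Type*} [CommRing 𝕜] {σ : Type*}
    (f : MvPolynomial σ 𝕜) (n : ℕ) : MvPolynomial (σ × ℕ) 𝕜 :=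
  PowerSeries.coeff n (arcSeries f)

/-- The defining ideal of the arc ring of `𝕜[Xᵢ]/(S)`. -/
noncomputable def arcIdeal {𝕜 : Type*} [CommRing 𝕜] {σ : Type*}
    (S : Set (MvPolynomial σ 𝕜)) : Ideal (MvPolynomial (σ × ℕ) 𝕜) :=
  Ideal.span {g | ∃ f ∈ S, ∃ n : ℕ, g = arcCoeff f n}

/-- The characterizing property of the lifted derivation `𝔡^{(k)}` on the arc ring
`J^∞(R)`, `R = 𝕜[X₁,…,X_m]/I`: it sends `r^{(j)}` to `(𝔡 r)^{(j−k)}` (zero for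
`j < k`), where arc coefficients are computed from arbitrary representatives. -/
def IsArcCurrentLift {𝕜 : Type*} [Field 𝕜] {m : ℕ}
    (I : Ideal (MvPolynomial (Fin m) 𝕜))
    (𝔡 : Derivation 𝕜 (MvPolynomial (Fin m) 𝕜 ⧸ I) (MvPolynomial (Fin m) 𝕜 ⧸ I))
    (k : ℕ)
    (D : Derivation 𝕜
      (MvPolynomial (Fin m × ℕ) 𝕜 ⧸ arcIdeal (I : Set (MvPolynomial (Fin m) 𝕜)))
      (MvPolynomial (Fin m × ℕ) 𝕜 ⧸ arcIdeal (I : Set (MvPolynomial (Fin m) 𝕜)))) :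
    Prop :=
  ∀ (p q : MvPolynomial (Fin m) 𝕜) (j : ℕ),
    Ideal.Quotient.mk I q = 𝔡 (Ideal.Quotient.mk I p) →
    D (Ideal.Quotient.mk _ (arcCoeff p j)) =
      if k ≤ j then
        Ideal.Quotient.mk (arcIdeal (I : Set (MvPolynomial (Fin m) 𝕜)))
          (arcCoeff q (j - k))
      else 0

section AuxGeneric

variable {𝕜 : Type*} [CommRing 𝕜] {σ : Type*}

lemma arcSeries_X (i : σ) :
    arcSeries (X i : MvPolynomial σ 𝕜) = PowerSeries.mk fun j => X (i, j) := by
  simp [arcSeries]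

lemma arcCoeff_X (i : σ) (j : ℕ) : arcCoeff (X i : MvPolynomial σ 𝕜) j = X (i, j) := by
  simp [arcCoeff, arcSeries_X]

lemma arcSeries_zero :
    arcSeries (0 : MvPolynomial σ 𝕜) = 0 :=
  map_zero (MvPolynomial.aeval _)

lemma arcSeries_add (f g : MvPolynomial σ 𝕜) :
    arcSeries (f + g) = arcSeries f + arcSeries g :=
  map_add (MvPolynomial.aeval _) f g

lemma arcSeries_mul (f g : MvPolynomial σ 𝕜) :
    arcSeries (f * g) = arcSeries f * arcSeries g :=
  map_mul (MvPolynomial.aeval _) f g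

lemma arcCoeff_sub (f g : MvPolynomial σ 𝕜) (n : ℕ) :
    arcCoeff (f - g) n = arcCoeff f n - arcCoeff g n := by
  have : arcSeries (f - g) = arcSeries f - arcSeries g :=
    map_sub (MvPolynomial.aeval _) f g
  simp [arcCoeff, this]

lemma arcCoeff_mem {S : Set (MvPolynomial σ 𝕜)} {f : MvPolynomial σ 𝕜} (hf : f ∈ S) (n : ℕ) :
    arcCoeff f n ∈ arcIdeal S :=
  Ideal.subset_span ⟨f, hf, n, rfl⟩

/-- Coefficientwise application of a derivation satisfies the Leibniz rule on power series. -/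
lemma coeffDer_mul {B : Type*} [CommRing B] [Algebra 𝕜 B] (d : Derivation 𝕜 B B)
    (φ ψ : PowerSeries B) :
    (PowerSeries.mk fun n => d (PowerSeries.coeff n (φ * ψ)))
      = φ * PowerSeries.mk (fun n => d (PowerSeries.coeff n ψ))
        + ψ * PowerSeries.mk (fun n => d (PowerSeries.coeff n φ)) := by
  ext n
  have swap :
      ∑ p ∈ Finset.HasAntidiagonal.antidiagonal n,
          PowerSeries.coeff p.2 ψ * d (PowerSeries.coeff p.1 φ)
        = ∑ p ∈ Finset.HasAntidiagonal.antidiagonal n,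
            PowerSeries.coeff p.1 ψ * d (PowerSeries.coeff p.2 φ) :=
    Finset.Nat.sum_antidiagonal_swap
      (f := fun p => PowerSeries.coeff p.1 ψ * d (PowerSeries.coeff p.2 φ))
  simp only [PowerSeries.coeff_mk, PowerSeries.coeff_mul, map_sum, Derivation.leibniz,
    smul_eq_mul, Finset.sum_add_distrib, map_add, PowerSeries.coeff_mk]
  rw [swap]

/-- The lift to the arc polynomial ring of the derivation determined by `q`, shifted by `k`. -/
noncomputable def arcDer (k : ℕ) (q : σ → MvPolynomial σ 𝕜) :
    Derivation 𝕜 (MvPolynomial (σ × ℕ) 𝕜) (MvPolynomial (σ × ℕ) 𝕜) :=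
  mkDerivation 𝕜 fun v => if k ≤ v.2 then arcCoeff (q v.1) (v.2 - k) else 0

lemma arcDer_series (k : ℕ) (q : σ → MvPolynomial σ 𝕜) (f : MvPolynomial σ 𝕜) :
    (PowerSeries.mk fun n => arcDer k q (arcCoeff f n))
      = PowerSeries.X ^ k * arcSeries (mkDerivation 𝕜 q f) := by
  have base : ∀ i : σ, (PowerSeries.mk fun n => arcDer k q (arcCoeff (X i) n))
      = PowerSeries.X ^ k * arcSeries (q i) := by
    intro i
    refine PowerSeries.ext fun n => ?_
    rw [PowerSeries.coeff_mk, arcCoeff_X, mul_comm, PowerSeries.coeff_mul_X_pow']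
    show (mkDerivation 𝕜 _) (X (i, n)) = _
    rw [mkDerivation_X]
    rfl
  induction f using MvPolynomial.induction_on with
  | C a =>
      have h0 : (mkDerivation 𝕜 q) (C a : MvPolynomial σ 𝕜) = 0 := derivation_C _ a
      rw [h0, arcSeries_zero, mul_zero]
      refine PowerSeries.ext fun n => ?_
      rw [PowerSeries.coeff_mk, map_zero]
      have h1 : arcCoeff (C a : MvPolynomial σ 𝕜) n
          = if n = 0 then C a else 0 := by
        simp [arcCoeff, arcSeries, PowerSeries.algebraMap_apply, PowerSeries.coeff_C,
          MvPolynomial.algebraMap_eq]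
      rw [h1]
      split_ifs
      · exact derivation_C _ a
      · exact map_zero _
  | add f g hf hg =>
      have h1 : (PowerSeries.mk fun n => arcDer k q (arcCoeff (f + g) n))
          = (PowerSeries.mk fun n => arcDer k q (arcCoeff f n))
            + PowerSeries.mk fun n => arcDer k q (arcCoeff g n) := by
        refine PowerSeries.ext fun n => ?_
        have : arcCoeff (f + g) n = arcCoeff f n + arcCoeff g n := by
          simp [arcCoeff, arcSeries_add]
        simp [this, map_add]
      rw [h1, hf, hg, map_add, arcSeries_add, mul_add]
  | mul_X f i hf =>
      have hmul : ∀ n : ℕ, arcCoeff (f * X i) n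
          = PowerSeries.coeff n (arcSeries f * arcSeries (X i)) := by
        intro n
        rw [arcCoeff, arcSeries_mul]
      calc (PowerSeries.mk fun n => arcDer k q (arcCoeff (f * X i) n))
          = PowerSeries.mk fun n =>
              arcDer k q (PowerSeries.coeff n (arcSeries f * arcSeries (X i))) := by
            refine PowerSeries.ext fun n => ?_
            rw [PowerSeries.coeff_mk, PowerSeries.coeff_mk, hmul]
        _ = arcSeries f * (PowerSeries.mk fun n => arcDer k q (arcCoeff (X i) n))
            + arcSeries (X i) * PowerSeries.mk fun n => arcDer k q (arcCoeff f n) :=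
            coeffDer_mul _ _ _
        _ = arcSeries f * (PowerSeries.X ^ k * arcSeries (q i))
            + arcSeries (X i) * (PowerSeries.X ^ k * arcSeries (mkDerivation 𝕜 q f)) := by
            rw [base, hf]
        _ = PowerSeries.X ^ k * arcSeries (mkDerivation 𝕜 q (f * X i)) := by
            rw [Derivation.leibniz, mkDerivation_X, smul_eq_mul, smul_eq_mul,
              arcSeries_add, arcSeries_mul, arcSeries_mul]
            ring

lemma arcDer_coeff (k : ℕ) (q : σ → MvPolynomial σ 𝕜) (f : MvPolynomial σ 𝕜) (n : ℕ) :
    arcDer k q (arcCoeff f n)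
      = if k ≤ n then arcCoeff (mkDerivation 𝕜 q f) (n - k) else 0 := by
  have h := congrArg (PowerSeries.coeff n) (arcDer_series k q f)
  rw [PowerSeries.coeff_mk, mul_comm, PowerSeries.coeff_mul_X_pow'] at h
  exact h

end AuxGeneric

section Quot

variable {𝕜 : Type*} [Field 𝕜] {m : ℕ} (I : Ideal (MvPolynomial (Fin m) 𝕜))

/-- Two derivations of the arc ring agreeing on the coordinate generators agree. -/
lemma derivation_ext_arc {J : Ideal (MvPolynomial (Fin m × ℕ) 𝕜)}
    {D1 D2 : Derivation 𝕜 (MvPolynomial (Fin m × ℕ) 𝕜 ⧸ J) (MvPolynomial (Fin m × ℕ) 𝕜 ⧸ J)}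
    (h : ∀ v, D1 (Ideal.Quotient.mk J (X v)) = D2 (Ideal.Quotient.mk J (X v))) : D1 = D2 := by
  refine Derivation.ext_of_adjoin_eq_top
    (s := Set.range fun v => Ideal.Quotient.mk J (X v)) ?_ ?_
  · have h1 : (Set.range fun v : Fin m × ℕ => Ideal.Quotient.mk J (X v))
        = (Ideal.Quotient.mkₐ 𝕜 J) '' Set.range (X : Fin m × ℕ → _) := by
      rw [← Set.range_comp]
      rfl
    rw [h1, ← AlgHom.map_adjoin, MvPolynomial.adjoin_range_X, Algebra.map_top,
      AlgHom.range_eq_top]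
    exact Ideal.Quotient.mkₐ_surjective 𝕜 J
  · rintro _ ⟨v, rfl⟩
    exact h v

variable {I}

lemma lift_unique {𝔡 : Derivation 𝕜 (MvPolynomial (Fin m) 𝕜 ⧸ I) (MvPolynomial (Fin m) 𝕜 ⧸ I)}
    {k : ℕ} {D D'} (hD : IsArcCurrentLift I 𝔡 k D) (hD' : IsArcCurrentLift I 𝔡 k D') :
    D = D' := by
  apply derivation_ext_arc
  rintro ⟨i, j⟩
  obtain ⟨qi, hqi⟩ := Ideal.Quotient.mk_surjective (𝔡 (Ideal.Quotient.mk I (X i)))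
  rw [← arcCoeff_X (𝕜 := 𝕜) i j, hD (X i) qi j hqi, hD' (X i) qi j hqi]

variable {𝔡 : Derivation 𝕜 (MvPolynomial (Fin m) 𝕜 ⧸ I) (MvPolynomial (Fin m) 𝕜 ⧸ I)}
  {q : Fin m → MvPolynomial (Fin m) 𝕜}

lemma mk_mkDerivation (hq : ∀ i, Ideal.Quotient.mk I (q i) = 𝔡 (Ideal.Quotient.mk I (X i)))
    (f : MvPolynomial (Fin m) 𝕜) :
    Ideal.Quotient.mk I (mkDerivation 𝕜 q f) = 𝔡 (Ideal.Quotient.mk I f) := by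
  induction f using MvPolynomial.induction_on with
  | C a =>
      rw [derivation_C, map_zero]
      have h1 : (Ideal.Quotient.mk I) (C a) = algebraMap 𝕜 _ a := by
        rw [← MvPolynomial.algebraMap_eq, ← Ideal.Quotient.mkₐ_eq_mk 𝕜 I]
        exact (Ideal.Quotient.mkₐ 𝕜 I).commutes a
      rw [h1, Derivation.map_algebraMap]
  | add f g hf hg => simp [map_add, hf, hg]
  | mul_X f i hf =>
      rw [Derivation.leibniz, mkDerivation_X, smul_eq_mul, smul_eq_mul, map_add, map_mul,
        map_mul, hf, hq i, map_mul, Derivation.leibniz, smul_eq_mul, smul_eq_mul]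

lemma arcDer_stable (hq : ∀ i, Ideal.Quotient.mk I (q i) = 𝔡 (Ideal.Quotient.mk I (X i)))
    (k : ℕ) :
    ∀ a ∈ arcIdeal (I : Set (MvPolynomial (Fin m) 𝕜)),
      arcDer k q a ∈ arcIdeal (I : Set (MvPolynomial (Fin m) 𝕜)) := by
  intro a ha
  induction ha using Submodule.span_induction with
  | mem x hx =>
      obtain ⟨f, hf, n, rfl⟩ := hx
      rw [arcDer_coeff]
      split_ifs
      · refine arcCoeff_mem ?_ _
        have h0 : Ideal.Quotient.mk I (mkDerivation 𝕜 q f) = 0 := by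
          rw [mk_mkDerivation hq, Ideal.Quotient.eq_zero_iff_mem.2 hf, map_zero]
        exact Ideal.Quotient.eq_zero_iff_mem.1 h0
      · exact zero_mem _
  | zero => rw [map_zero]; exact zero_mem _
  | add x y hx hy ihx ihy => rw [map_add]; exact add_mem ihx ihy
  | smul c x hx ih =>
      rw [smul_eq_mul, Derivation.leibniz, smul_eq_mul, smul_eq_mul]
      exact add_mem (Ideal.mul_mem_left _ _ ih) (Ideal.mul_mem_right _ _ hx)

variable (I) in
/-- The lifted derivation on the arc ring, as a linear map. -/
noncomputable def arcLiftLin (k : ℕ) (q : Fin m → MvPolynomial (Fin m) 𝕜)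
    (hstab : ∀ a ∈ arcIdeal (I : Set (MvPolynomial (Fin m) 𝕜)),
      arcDer k q a ∈ arcIdeal (I : Set (MvPolynomial (Fin m) 𝕜))) :
    (MvPolynomial (Fin m × ℕ) 𝕜 ⧸ arcIdeal (I : Set (MvPolynomial (Fin m) 𝕜))) →ₗ[𝕜]
      (MvPolynomial (Fin m × ℕ) 𝕜 ⧸ arcIdeal (I : Set (MvPolynomial (Fin m) 𝕜))) :=
  (Submodule.liftQ
    (Submodule.restrictScalars 𝕜 (arcIdeal (I : Set (MvPolynomial (Fin m) 𝕜))))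
    ((Ideal.Quotient.mkₐ 𝕜 (arcIdeal (I : Set (MvPolynomial (Fin m) 𝕜)))).toLinearMap ∘ₗ
      (arcDer k q).toLinearMap)
    (fun x hx => by
      simp only [LinearMap.mem_ker, LinearMap.comp_apply]
      exact Ideal.Quotient.eq_zero_iff_mem.2 (hstab x hx))).comp
    (Submodule.Quotient.restrictScalarsEquiv 𝕜
      (arcIdeal (I : Set (MvPolynomial (Fin m) 𝕜)))).symm.toLinearMap

lemma arcLiftLin_mk (k : ℕ) (q : Fin m → MvPolynomial (Fin m) 𝕜) (hstab)
    (a : MvPolynomial (Fin m × ℕ) 𝕜) :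
    arcLiftLin I k q hstab (Ideal.Quotient.mk _ a) = Ideal.Quotient.mk _ (arcDer k q a) :=
  rfl

variable (I) in
/-- The lifted derivation on the arc ring. -/
noncomputable def arcLift (k : ℕ) (q : Fin m → MvPolynomial (Fin m) 𝕜)
    (hstab : ∀ a ∈ arcIdeal (I : Set (MvPolynomial (Fin m) 𝕜)),
      arcDer k q a ∈ arcIdeal (I : Set (MvPolynomial (Fin m) 𝕜))) :
    Derivation 𝕜
      (MvPolynomial (Fin m × ℕ) 𝕜 ⧸ arcIdeal (I : Set (MvPolynomial (Fin m) 𝕜)))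
      (MvPolynomial (Fin m × ℕ) 𝕜 ⧸ arcIdeal (I : Set (MvPolynomial (Fin m) 𝕜))) :=
  Derivation.mk' (arcLiftLin I k q hstab) (fun a b => by
    obtain ⟨x, rfl⟩ := Ideal.Quotient.mk_surjective a
    obtain ⟨y, rfl⟩ := Ideal.Quotient.mk_surjective b
    rw [← map_mul, arcLiftLin_mk, arcLiftLin_mk, arcLiftLin_mk, Derivation.leibniz,
      smul_eq_mul, smul_eq_mul, map_add, map_mul, map_mul, smul_eq_mul, smul_eq_mul])

lemma arcLift_isLift (hq : ∀ i, Ideal.Quotient.mk I (q i) = 𝔡 (Ideal.Quotient.mk I (X i)))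
    (k : ℕ) (hstab) : IsArcCurrentLift I 𝔡 k (arcLift I k q hstab) := by
  intro p qq j hpq
  have happ : arcLift I k q hstab (Ideal.Quotient.mk _ (arcCoeff p j))
      = Ideal.Quotient.mk _ (arcDer k q (arcCoeff p j)) := arcLiftLin_mk k q hstab _
  rw [happ, arcDer_coeff]
  split_ifs with h
  · rw [Ideal.Quotient.mk_eq_mk_iff_sub_mem, ← arcCoeff_sub]
    refine arcCoeff_mem ?_ _
    exact (Ideal.Quotient.mk_eq_mk_iff_sub_mem _ _).1
      ((mk_mkDerivation hq p).trans hpq.symm)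
  · exact map_zero _

end Quot

/-- For a derivation `𝔡` of `R = 𝕜[X₁,…,X_m]/I` and `k ≥ 0` there is a unique
derivation `𝔡^{(k)}` of `J^∞(R)` with `𝔡^{(k)}(r^{(j)}) = (𝔡 r)^{(j−k)}`; moreover
`[𝔡₁^{(k₁)}, 𝔡₂^{(k₂)}] = [𝔡₁,𝔡₂]^{(k₁+k₂)}`, so the current Lie algebra
`Der(R)[s]` acts on `J^∞(R)` by derivations. -/
theorem current_algebra_action_on_arc_ring
    (𝕜 : Type*) [Field 𝕜] (m : ℕ) (I : Ideal (MvPolynomial (Fin m) 𝕜)) :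
    (∀ (𝔡 : Derivation 𝕜 (MvPolynomial (Fin m) 𝕜 ⧸ I) (MvPolynomial (Fin m) 𝕜 ⧸ I))
        (k : ℕ), ∃! D, IsArcCurrentLift I 𝔡 k D) ∧
    (∀ (𝔡₁ 𝔡₂ : Derivation 𝕜 (MvPolynomial (Fin m) 𝕜 ⧸ I) (MvPolynomial (Fin m) 𝕜 ⧸ I))
        (k₁ k₂ : ℕ) D₁ D₂ D₃,
        IsArcCurrentLift I 𝔡₁ k₁ D₁ → IsArcCurrentLift I 𝔡₂ k₂ D₂ →
        IsArcCurrentLift I ⁅𝔡₁, 𝔡₂⁆ (k₁ + k₂) D₃ →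
        ⁅D₁, D₂⁆ = D₃) := by
  constructor
  · intro 𝔡 k
    choose q hq using fun i => Ideal.Quotient.mk_surjective (𝔡 (Ideal.Quotient.mk I (X i)))
    have hstab := arcDer_stable (𝔡 := 𝔡) hq k
    exact ⟨arcLift I k q hstab, arcLift_isLift hq k hstab,
      fun D' hD' => lift_unique hD' (arcLift_isLift hq k hstab)⟩
  · intro 𝔡₁ 𝔡₂ k₁ k₂ D₁ D₂ D₃ h1 h2 h3
    apply derivation_ext_arc
    rintro ⟨i, j⟩
    obtain ⟨q1, hq1⟩ := Ideal.Quotient.mk_surjective (𝔡₁ (Ideal.Quotient.mk I (X i)))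
    obtain ⟨q2, hq2⟩ := Ideal.Quotient.mk_surjective (𝔡₂ (Ideal.Quotient.mk I (X i)))
    obtain ⟨q12, hq12⟩ := Ideal.Quotient.mk_surjective (𝔡₁ (Ideal.Quotient.mk I q2))
    obtain ⟨q21, hq21⟩ := Ideal.Quotient.mk_surjective (𝔡₂ (Ideal.Quotient.mk I q1))
    have hbr : Ideal.Quotient.mk I (q12 - q21) = ⁅𝔡₁, 𝔡₂⁆ (Ideal.Quotient.mk I (X i)) := by
      rw [map_sub, hq12, hq21, hq1, hq2, Derivation.commutator_apply]
    rw [← arcCoeff_X (𝕜 := 𝕜) i j, Derivation.commutator_apply,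
      h2 (X i) q2 j hq2, h1 (X i) q1 j hq1, h3 (X i) (q12 - q21) j hbr]
    by_cases hj : k₁ + k₂ ≤ j
    · have hk2 : k₂ ≤ j := by omega
      have hk1 : k₁ ≤ j := by omega
      rw [if_pos hk2, if_pos hk1, if_pos hj, h1 q2 q12 (j - k₂) hq12,
        h2 q1 q21 (j - k₁) hq21, if_pos (show k₁ ≤ j - k₂ by omega),
        if_pos (show k₂ ≤ j - k₁ by omega),
        show j - k₂ - k₁ = j - (k₁ + k₂) by omega,
        show j - k₁ - k₂ = j - (k₁ + k₂) by omega, arcCoeff_sub, map_sub]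
    · rw [if_neg hj]
      have e1 : D₁ (if k₂ ≤ j then
          Ideal.Quotient.mk (arcIdeal (I : Set (MvPolynomial (Fin m) 𝕜)))
            (arcCoeff q2 (j - k₂)) else 0) = 0 := by
        by_cases hk2 : k₂ ≤ j
        · rw [if_pos hk2, h1 q2 q12 (j - k₂) hq12, if_neg (show ¬ k₁ ≤ j - k₂ by omega)]
        · rw [if_neg hk2, map_zero]
      have e2 : D₂ (if k₁ ≤ j then
          Ideal.Quotient.mk (arcIdeal (I : Set (MvPolynomial (Fin m) 𝕜)))
            (arcCoeff q1 (j - k₁)) else 0) = 0 := by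
        by_cases hk1 : k₁ ≤ j
        · rw [if_pos hk1, h2 q1 q21 (j - k₁) hq21, if_neg (show ¬ k₂ ≤ j - k₁ by omega)]
        · rw [if_neg hk1, map_zero]
      rw [e1, e2, sub_zero]
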